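/- For k ≥ 3 and r ≥ 2, the minimum number of arcs one must add to the blowup B(T_r) in order to create a directed k-cycle equals ⌈k/r⌉; that is, disc_{C_k}(T_r) = ⌈k/r⌉. -/

import Mathlib

/-- For `k ≥ 3` and `r ≥ 2`, the minimum number of arcs one must add to the blowup
`B(T_r)` of the transitive tournament (vertex set `Fin r × ℕ`, arc `(i,a) → (j,b)`
iff `i < j`) in order to create a directed `k`-cycle equals `⌈k/r⌉`;
that is, `disc_{C_k}(T_r) = ⌈k/r⌉`. -/
theorem stmt_6 (k r : ℕ) (hk : 3 ≤ k) (hr : 2 ≤ r) :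
    IsLeast {m | ∃ F : Finset ((Fin r × ℕ) × (Fin r × ℕ)), F.card = m ∧
      ∃ v : ZMod k → Fin r × ℕ, Function.Injective v ∧
        ∀ i : ZMod k, (v i).1 < (v (i + 1)).1 ∨ (v i, v (i + 1)) ∈ F}
      ((k + r - 1) / r) := by
  have hk0 : 0 < k := by omega
  haveI : NeZero k := ⟨by omega⟩
  have hr0 : 0 < r := by omega
  set m := (k + r - 1) / r with hm
  -- basic facts about m
  have hd : r * m + (k + r - 1) % r = k + r - 1 := by
    rw [hm]; exact Nat.div_add_mod _ _
  have hd2 : (k + r - 1) % r < r := Nat.mod_lt _ hr0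
  have hcomm : m * r = r * m := Nat.mul_comm _ _
  have hmr : k ≤ m * r := by omega
  have hmr' : m * r ≤ k + r - 1 := by omega
  have hm1 : 1 ≤ m := by
    rw [hm]; exact Nat.div_pos (by omega) hr0
  constructor
  · -- membership: construction
    set v : ZMod k → Fin r × ℕ :=
      fun i => (⟨i.val % r, Nat.mod_lt _ hr0⟩, i.val / r) with hv
    have hvinj : Function.Injective v := by
      intro i j h
      have h1 : i.val % r = j.val % r := congrArg Fin.val (congrArg Prod.fst h)
      have h2 : i.val / r = j.val / r := congrArg Prod.snd h
      apply ZMod.val_injective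
      have d1 := Nat.div_add_mod i.val r
      have d2 := Nat.div_add_mod j.val r
      have h3 : r * (i.val / r) = r * (j.val / r) := by rw [h2]
      omega
    set e : ℕ → ℕ := fun t => min ((t + 1) * r - 1) (k - 1) with he
    have he_lt : ∀ t, e t < k := fun t => by
      simp only [he]; omega
    have he_small : ∀ t, t + 1 < m → e t = (t + 1) * r - 1 ∧ (t + 1) * r - 1 < k - 1 := by
      intro t ht
      have h1 : (t + 1) * r + r ≤ m * r := by
        have : t + 2 ≤ m := ht
        calc (t + 1) * r + r = (t + 2) * r := by ring
        _ ≤ m * r := Nat.mul_le_mul_right r this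
      have h2 : (t + 1) * r - 1 < k - 1 := by omega
      exact ⟨by simp only [he]; omega, h2⟩
    have he_last : e (m - 1) = k - 1 := by
      have : (m - 1 + 1) * r = m * r := by congr 1; omega
      simp only [he, this]; omega
    have he_inj : ∀ t ∈ Finset.range m, ∀ s ∈ Finset.range m, e t = e s → t = s := by
      intro t ht s hs h
      simp only [Finset.mem_range] at ht hs
      rcases Nat.lt_or_ge (t + 1) m with h1 | h1 <;> rcases Nat.lt_or_ge (s + 1) m with h2 | h2
      · obtain ⟨et, _⟩ := he_small t h1
        obtain ⟨es, _⟩ := he_small s h2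
        rw [et, es] at h
        have pt : 0 < (t + 1) * r := Nat.mul_pos (by omega) hr0
        have ps : 0 < (s + 1) * r := Nat.mul_pos (by omega) hr0
        have : (t + 1) * r = (s + 1) * r := by omega
        have := Nat.eq_of_mul_eq_mul_right hr0 this
        omega
      · obtain ⟨et, et'⟩ := he_small t h1
        have hs' : s = m - 1 := by omega
        rw [et, hs', he_last] at h; omega
      · obtain ⟨es, es'⟩ := he_small s h2
        have ht' : t = m - 1 := by omega
        rw [es, ht', he_last] at h; omega
      · omega
    set F : Finset ((Fin r × ℕ) × (Fin r × ℕ)) :=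
      (Finset.range m).image (fun t => (v (e t), v ((e t : ZMod k) + 1))) with hF
    refine ⟨F, ?_, v, hvinj, ?_⟩
    · rw [hF, Finset.card_image_of_injOn, Finset.card_range]
      intro t ht s hs h
      have h1 : v (e t) = v (e s) := congrArg Prod.fst h
      have h2 : ((e t : ℕ) : ZMod k) = ((e s : ℕ) : ZMod k) := hvinj h1
      have h3 : e t = e s := by
        have := congrArg ZMod.val h2
        rwa [ZMod.val_cast_of_lt (he_lt t), ZMod.val_cast_of_lt (he_lt s)] at this
      exact he_inj t ht s hs h3
    · intro i
      have hival : i.val < k := ZMod.val_lt i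
      have hicast : ((i.val : ℕ) : ZMod k) = i := ZMod.natCast_zmod_val i
      set x := i.val with hx
      by_cases hcase : x + 1 < k ∧ ¬ r ∣ (x + 1)
      · left
        obtain ⟨hlt, hndvd⟩ := hcase
        have h1 : (i + 1).val = x + 1 := by
          rw [← hicast]
          have : ((x : ℕ) : ZMod k) + 1 = ((x + 1 : ℕ) : ZMod k) := by push_cast; ring
          rw [this, ZMod.val_cast_of_lt hlt]
        have hxr : x % r < r := Nat.mod_lt _ hr0
        have hmod : (x + 1) % r = x % r + 1 := by
          rcases Nat.lt_or_ge (x % r + 1) r with h | h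
          · conv_lhs => rw [← Nat.div_add_mod x r]
            rw [Nat.add_assoc, Nat.mul_add_mod]
            exact Nat.mod_eq_of_lt h
          · exfalso
            have hxr1 : x % r + 1 = r := by omega
            apply hndvd
            have : x + 1 = r * (x / r) + r := by
              have := Nat.div_add_mod x r; omega
            rw [this]
            exact ⟨x / r + 1, by ring⟩
        show x % r < (i + 1).val % r
        rw [h1, hmod]; omega
      · right
        -- pick t
        have harc : ∀ t < m, e t = x → (v i, v (i + 1)) ∈ F := by
          intro t ht hex
          rw [hF, Finset.mem_image]
          refine ⟨t, Finset.mem_range.mpr ht, ?_⟩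
          rw [hex, hicast]
        rcases Nat.lt_or_ge (x + 1) k with hlt | hge
        · -- r ∣ x + 1
          have hdvd : r ∣ (x + 1) := by tauto
          obtain ⟨c, hc⟩ := hdvd
          have hrc : r * c = c * r := Nat.mul_comm _ _
          have hc1 : 1 ≤ c := by
            rcases Nat.eq_zero_or_pos c with h | h
            · rw [h, Nat.mul_zero] at hc; omega
            · exact h
          have hcm : c < m := by
            by_contra hcon
            push_neg at hcon
            have : m * r ≤ c * r := Nat.mul_le_mul_right r hcon
            omega
          refine harc (c - 1) (by omega) ?_
          obtain ⟨et, _⟩ := he_small (c - 1) (by omega)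
          have h5 : (c - 1 + 1) * r = c * r := by congr 1; omega
          rw [et, h5]
          omega
        · -- x + 1 = k
          have hxk : x = k - 1 := by omega
          refine harc (m - 1) (by omega) ?_
          rw [he_last, hxk]
  · -- lower bound
    rintro n ⟨F, hFcard, v, hvinj, hcyc⟩
    subst hFcard
    set S : Finset (ZMod k) :=
      Finset.univ.filter (fun i => ¬ (v i).1 < (v (i + 1)).1) with hS
    -- S nonempty
    have hSne : S.Nonempty := by
      by_contra hcon
      rw [Finset.not_nonempty_iff_eq_empty] at hcon
      have hincr : ∀ i : ZMod k, (v i).1 < (v (i + 1)).1 := by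
        intro i
        by_contra h
        have : i ∈ S := by
          rw [hS]
          simp only [Finset.mem_filter, Finset.mem_univ, true_and, not_lt]
          exact not_lt.mp h
        rw [hcon] at this; exact absurd this (Finset.notMem_empty i)
      have key : ∀ n : ℕ, ((v 0).1 : ℕ) + n ≤ ((v (n : ZMod k)).1 : ℕ) := by
        intro n
        induction n with
        | zero => simp
        | succ n ih =>
          have := hincr (n : ZMod k)
          have h2 : ((n : ZMod k) + 1) = ((n + 1 : ℕ) : ZMod k) := by push_cast; ring
          rw [h2] at this
          omega
      have := key r
      have h2 : ((v (r : ZMod k)).1 : ℕ) < r := (v (r : ZMod k)).1.isLt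
      omega
    obtain ⟨j0, hj0⟩ := hSne
    -- existence of next descent
    have hex : ∀ i : ZMod k, ∃ t : ℕ, (i + (t : ZMod k)) ∈ S := by
      intro i
      refine ⟨(j0 - i).val, ?_⟩
      rw [ZMod.natCast_zmod_val]
      simpa using hj0
    set t : ZMod k → ℕ := fun i => Nat.find (hex i) with ht
    have htS : ∀ i, (i + (t i : ZMod k)) ∈ S := fun i => Nat.find_spec (hex i)
    have htmin : ∀ i, ∀ s < t i, (i + (s : ZMod k)) ∉ S := fun i s hs => Nat.find_min (hex i) hs
    -- climb
    have climb : ∀ i : ZMod k, ∀ s ≤ t i, ((v i).1 : ℕ) + s ≤ ((v (i + (s : ZMod k))).1 : ℕ) := by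
      intro i s
      induction s with
      | zero => intro _; simp
      | succ s ih =>
        intro hs
        have h1 : s < t i := by omega
        have h2 := htmin i s h1
        have h3 : (v (i + (s : ZMod k))).1 < (v (i + (s : ZMod k) + 1)).1 := by
          by_contra h
          exact h2 (by
            rw [hS]
            simp only [Finset.mem_filter, Finset.mem_univ, true_and, not_lt]
            exact not_lt.mp h)
        have h4 : i + (s : ZMod k) + 1 = i + ((s + 1 : ℕ) : ZMod k) := by push_cast; ring
        rw [h4] at h3
        have := ih (by omega)
        omega
    have htlt : ∀ i, t i < r := by
      intro i
      have := climb i (t i) le_rfl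
      have h2 : ((v (i + (t i : ZMod k))).1 : ℕ) < r := (v _).1.isLt
      omega
    -- injection into S ×ˢ range r
    have hinj : k ≤ S.card * r := by
      have hcard : (Finset.univ : Finset (ZMod k)).card = k := by
        rw [Finset.card_univ, ZMod.card]
      have := Finset.card_le_card_of_injOn
        (f := fun i : ZMod k => ((i + (t i : ZMod k), t i) : ZMod k × ℕ))
        (s := Finset.univ) (t := S ×ˢ Finset.range r)
        (fun i _ => Finset.mk_mem_product (htS i) (Finset.mem_range.mpr (htlt i)))
        (by
          intro i _ j _ h
          have h1 : t i = t j := congrArg Prod.snd h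
          have h2 : i + (t i : ZMod k) = j + (t j : ZMod k) := congrArg Prod.fst h
          rw [h1] at h2
          exact add_right_cancel h2)
      rwa [hcard, Finset.card_product, Finset.card_range] at this
    -- S injects into F
    have hSF : S.card ≤ F.card := by
      apply Finset.card_le_card_of_injOn (f := fun i => (v i, v (i + 1)))
      · intro i hi
        replace hi : i ∈ S := Finset.mem_coe.mp hi
        rw [hS, Finset.mem_filter] at hi
        rcases hcyc i with h | h
        · exact absurd h hi.2
        · exact h
      · intro i _ j _ h
        exact hvinj (congrArg Prod.fst h)
    -- conclude
    have hkF : k ≤ F.card * r := le_trans hinj (Nat.mul_le_mul_right r hSF)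
    rw [← Nat.lt_succ_iff, Nat.div_lt_iff_lt_mul hr0]
    calc k + r - 1 < F.card * r + r := by omega
    _ = (F.card + 1) * r := by ring
    _ = Nat.succ F.card * r := rfl
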